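/- Let p > 2 be prime, k ≥ 3, and let a = (a_1,…,a_k), b = (b_1,…,b_k) ∈ 𝔽_p^k satisfy a_i b_j − a_j b_i ≠ 0 for all i ≠ j. Then there is a constant C (depending on p and k only) such that for every n ≥ 1, the number of tuples (h_1, h_2, (r_1,s_1), (r_1',s_1'), (r_2,s_2), (r_2',s_2')) — where h_1, h_2 ∈ 𝔽_p^n with 0 ≺ h_1, 0 ≺ h_2 and h_1 ≠ h_2; each of the four pairs is a linearly independent pair in (𝔽_p^n)²; h_1 ∈ M(r_1,s_1) with h_1 ⪰ |h'| for all h' ∈ M(r_1,s_1), and likewise h_1 is the ⪯-maximum of |M(r_1',s_1')| with h_1 ∈ M(r_1',s_1'), and h_2 plays the same role for M(r_2,s_2) and M(r_2',s_2'); the multiset |M(r_1,s_1)| ∪ |M(r_1',s_1')| shares at least one common element with |M(r_2,s_2)| ∪ |M(r_2',s_2')|; and the 4k-element multiset |M(r_1,s_1)| ∪ |M(r_1',s_1')| ∪ |M(r_2,s_2)| ∪ |M(r_2',s_2')| can be partitioned into pairs of equal elements — is at most C·p^{3n}. -/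
import Mathlib


open Finset
open scoped Classical
set_option maxHeartbeats 1000000

/-- `h ≻ 0` in the lexicographic order on `𝔽_p^n`, identifying `𝔽_p` with
`{−(p−1)/2, …, (p−1)/2}` via `ZMod.valMinAbs`. -/
def posLex (p n : ℕ) (h : Fin n → ZMod p) : Prop :=
  ∃ i : Fin n, 0 < (h i).valMinAbs ∧ ∀ j : Fin n, j < i → h j = 0

/-- The lexicographic order `g ⪯ h` on `𝔽_p^n`. -/
def lexLe (p n : ℕ) (g h : Fin n → ZMod p) : Prop :=
  g = h ∨ ∃ i : Fin n, (g i).valMinAbs < (h i).valMinAbs ∧ ∀ j : Fin n, j < i → g j = h j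

/-- `|h| := h` if `h ⪰ 0`, and `−h` otherwise. -/
noncomputable def absLex (p n : ℕ) (h : Fin n → ZMod p) : Fin n → ZMod p :=
  if h = 0 ∨ posLex p n h then h else -h

/-- The multiset `M(r,s) = {a_i r + b_i s : 1 ≤ i ≤ k}`. -/
def Mset (p n k : ℕ) (a b : Fin k → ZMod p) (r s : Fin n → ZMod p) :
    Multiset (Fin n → ZMod p) :=
  (Finset.univ : Finset (Fin k)).val.map (fun i => a i • r + b i • s)

namespace Stmt19

variable (p n k : ℕ) (a b : Fin k → ZMod p)

abbrev Pr := (Fin n → ZMod p) × (Fin n → ZMod p)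

def elt (P : Pr p n) (i : Fin k) : Fin n → ZMod p := a i • P.1 + b i • P.2

noncomputable def F (P : Pr p n) (i : Fin k) : Fin n → ZMod p := absLex p n (elt p n k a b P i)

noncomputable def Bm (P : Pr p n) : Multiset (Fin n → ZMod p) :=
  (Mset p n k a b P.1 P.2).map (absLex p n)

abbrev Eqn := Fin k × Bool × Fin 3 × Fin k
abbrev Desc := Eqn k ⊕ (Eqn k × Eqn k)
abbrev Delta := Fin 2 × Fin k × Fin k × Desc k × Desc k × Desc k

lemma Bm_eq (P : Pr p n) : Bm p n k a b P = Multiset.map (F p n k a b P) Finset.univ.val := by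
  rw [Bm, Mset, Multiset.map_map]; rfl

lemma mem_Bm {w : Fin n → ZMod p} {P : Pr p n} :
    w ∈ Bm p n k a b P ↔ ∃ i, F p n k a b P i = w := by
  rw [Bm_eq]; simp [List.mem_ofFn]

lemma absLex_eq_or {u v : Fin n → ZMod p} (h : absLex p n u = absLex p n v) :
    u = v ∨ u = -v := by
  unfold absLex at h
  split_ifs at h
  · exact Or.inl h
  · exact Or.inr h
  · exact Or.inr (by rw [← h, neg_neg])
  · exact Or.inl (neg_injective h)

lemma pair_coeffs {P : Pr p n} (hP : LinearIndependent (ZMod p) ![P.1, P.2])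
    {c d : ZMod p} (h : c • P.1 + d • P.2 = 0) : c = 0 ∧ d = 0 :=
  (LinearIndependent.pair_iff.mp hP) c d h

lemma F_injective (hminors : ∀ i j : Fin k, i ≠ j → a i * b j - a j * b i ≠ 0)
    {P : Pr p n} (hP : LinearIndependent (ZMod p) ![P.1, P.2]) :
    Function.Injective (F p n k a b P) := by
  intro i j hij
  by_contra hne
  unfold F at hij
  rcases absLex_eq_or p n hij with h | h
  · unfold elt at h
    have h0 : (a i - a j) • P.1 + (b i - b j) • P.2 = 0 := by
      linear_combination (norm := module) h
    obtain ⟨ha, hb⟩ := pair_coeffs p n hP h0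
    exact hminors i j hne (by rw [sub_eq_zero.mp ha, sub_eq_zero.mp hb]; ring)
  · unfold elt at h
    have h0 : (a i + a j) • P.1 + (b i + b j) • P.2 = 0 := by
      linear_combination (norm := module) h
    obtain ⟨ha, hb⟩ := pair_coeffs p n hP h0
    exact hminors i j hne
      (by rw [eq_neg_of_add_eq_zero_left ha, eq_neg_of_add_eq_zero_left hb]; ring)

lemma Bm_nodup (hminors : ∀ i j : Fin k, i ≠ j → a i * b j - a j * b i ≠ 0)
    {P : Pr p n} (hP : LinearIndependent (ZMod p) ![P.1, P.2]) :
    (Bm p n k a b P).Nodup := by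
  rw [Bm_eq]
  exact Multiset.Nodup.map (F_injective p n k a b hminors hP) Finset.univ.nodup

lemma card_filter_F (hminors : ∀ i j : Fin k, i ≠ j → a i * b j - a j * b i ≠ 0)
    {P : Pr p n} (hP : LinearIndependent (ZMod p) ![P.1, P.2])
    (φ : (Fin n → ZMod p) → Prop) [DecidablePred φ] :
    (Finset.univ.filter fun i => φ (F p n k a b P i)).card
      = ((Bm p n k a b P).toFinset.filter φ).card := by
  apply Finset.card_bij (fun i _ => F p n k a b P i)
  · intro i hi
    rw [Finset.mem_filter] at *
    exact ⟨Multiset.mem_toFinset.mpr ((mem_Bm p n k a b).mpr ⟨i, rfl⟩), hi.2⟩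
  · intro i _ j _ h
    exact F_injective p n k a b hminors hP h
  · intro w hw
    rw [Finset.mem_filter, Multiset.mem_toFinset] at hw
    obtain ⟨i, hi⟩ := (mem_Bm p n k a b).mp hw.1
    exact ⟨i, Finset.mem_filter.mpr ⟨Finset.mem_univ _, by rw [hi]; exact hw.2⟩, hi⟩

lemma ab_ne (hk : 3 ≤ k) (hminors : ∀ i j : Fin k, i ≠ j → a i * b j - a j * b i ≠ 0)
    (i : Fin k) : ¬ (a i = 0 ∧ b i = 0) := by
  rintro ⟨ha, hb⟩
  obtain ⟨j, hj⟩ : ∃ j : Fin k, j ≠ i :=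
    Fintype.exists_ne_of_one_lt_card (by simp; omega) i
  exact (hminors i j (fun h => hj h.symm)) (by rw [ha, hb]; ring)

lemma two_from_card {φ : Fin k → Prop} [DecidablePred φ] (h : 2 ≤ (Finset.univ.filter φ).card) :
    ∃ i i', i ≠ i' ∧ φ i ∧ φ i' := by
  have h1 : 1 < (Finset.univ.filter φ).card := by omega
  obtain ⟨i, hi, i', hi', hne⟩ := Finset.one_lt_card.mp h1
  exact ⟨i, i', hne, (Finset.mem_filter.mp hi).2, (Finset.mem_filter.mp hi').2⟩

noncomputable def evalEqn (env : Fin 3 → Pr p n) (e : Eqn k) : Fin n → ZMod p :=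
  if e.2.1 then elt p n k a b (env e.2.2.1) e.2.2.2 else - elt p n k a b (env e.2.2.1) e.2.2.2

noncomputable def decodePair (env : Fin 3 → Pr p n) (w : Fin n → ZMod p) : Desc k → Pr p n
  | Sum.inl e =>
      if b e.1 ≠ 0 then (w, (b e.1)⁻¹ • (evalEqn p n k a b env e - a e.1 • w))
      else ((a e.1)⁻¹ • evalEqn p n k a b env e, w)
  | Sum.inr ee =>
      ((a ee.1.1 * b ee.2.1 - a ee.2.1 * b ee.1.1)⁻¹ •
         (b ee.2.1 • evalEqn p n k a b env ee.1 - b ee.1.1 • evalEqn p n k a b env ee.2),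
       (a ee.1.1 * b ee.2.1 - a ee.2.1 * b ee.1.1)⁻¹ •
         (a ee.1.1 • evalEqn p n k a b env ee.2 - a ee.2.1 • evalEqn p n k a b env ee.1))

noncomputable def dP11 (t : Pr p n × (Fin n → ZMod p) × Delta k) : Pr p n :=
  decodePair p n k a b ![t.1, t.1, t.1] t.2.1 t.2.2.2.2.2.1

noncomputable def dPf (t : Pr p n × (Fin n → ZMod p) × Delta k) : Pr p n :=
  decodePair p n k a b ![t.1, dP11 p n k a b t, dP11 p n k a b t] t.2.1 t.2.2.2.2.2.2.1

noncomputable def dPs (t : Pr p n × (Fin n → ZMod p) × Delta k) : Pr p n :=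
  decodePair p n k a b ![t.1, dP11 p n k a b t, dPf p n k a b t] t.2.1 t.2.2.2.2.2.2.2

noncomputable def Dec (t : Pr p n × (Fin n → ZMod p) × Delta k) :
    (Fin 2 → (Fin n → ZMod p)) × (Fin 2 → Fin 2 → Pr p n) :=
  (fun l => if l = 0 then elt p n k a b t.1 t.2.2.2.1
            else elt p n k a b (dPf p n k a b t) t.2.2.2.2.1,
   fun l m => if l = 0 then (if m = 0 then t.1 else dP11 p n k a b t)
              else (if m = t.2.2.1 then dPf p n k a b t else dPs p n k a b t))

lemma decode_twoEq [Fact p.Prime]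
    (hminors : ∀ i j : Fin k, i ≠ j → a i * b j - a j * b i ≠ 0)
    {P : Pr p n} (env : Fin 3 → Pr p n) (e e' : Eqn k) (hne : e.1 ≠ e'.1)
    (he : a e.1 • P.1 + b e.1 • P.2 = evalEqn p n k a b env e)
    (he' : a e'.1 • P.1 + b e'.1 • P.2 = evalEqn p n k a b env e')
    (w : Fin n → ZMod p) :
    decodePair p n k a b env w (Sum.inr (e, e')) = P := by
  have hD : a e.1 * b e'.1 - a e'.1 * b e.1 ≠ 0 := hminors _ _ hne
  have h1 : b e'.1 • evalEqn p n k a b env e - b e.1 • evalEqn p n k a b env e'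
      = (a e.1 * b e'.1 - a e'.1 * b e.1) • P.1 := by
    rw [← he, ← he']; module
  have h2 : a e.1 • evalEqn p n k a b env e' - a e'.1 • evalEqn p n k a b env e
      = (a e.1 * b e'.1 - a e'.1 * b e.1) • P.2 := by
    rw [← he, ← he']; module
  show ((a e.1 * b e'.1 - a e'.1 * b e.1)⁻¹ • _, (a e.1 * b e'.1 - a e'.1 * b e.1)⁻¹ • _) = P
  rw [h1, h2, smul_smul, smul_smul, inv_mul_cancel₀ hD, one_smul, one_smul]

lemma decode_oneEq [Fact p.Prime] {P : Pr p n} (env : Fin 3 → Pr p n) (e : Eqn k)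
    (hab : ¬ (a e.1 = 0 ∧ b e.1 = 0))
    (he : a e.1 • P.1 + b e.1 • P.2 = evalEqn p n k a b env e) :
    ∃ w, decodePair p n k a b env w (Sum.inl e) = P := by
  by_cases hb : b e.1 = 0
  · have ha : a e.1 ≠ 0 := fun h => hab ⟨h, hb⟩
    refine ⟨P.2, ?_⟩
    show (if b e.1 ≠ 0 then _ else ((a e.1)⁻¹ • evalEqn p n k a b env e, P.2)) = P
    rw [if_neg (by simpa using hb)]
    have hval : evalEqn p n k a b env e = a e.1 • P.1 := by
      rw [← he, hb, zero_smul, add_zero]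
    rw [hval, smul_smul, inv_mul_cancel₀ ha, one_smul]
  · refine ⟨P.1, ?_⟩
    show (if b e.1 ≠ 0 then (P.1, (b e.1)⁻¹ • (evalEqn p n k a b env e - a e.1 • P.1)) else _) = P
    rw [if_pos hb]
    have hval : evalEqn p n k a b env e - a e.1 • P.1 = b e.1 • P.2 := by
      rw [← he]; module
    rw [hval, smul_smul, inv_mul_cancel₀ hb, one_smul]

lemma eqn_of_mem {P Q : Pr p n} {i : Fin k} (env : Fin 3 → Pr p n) (s : Fin 3)
    (hs : env s = Q) (h : F p n k a b P i ∈ Bm p n k a b Q) :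
    ∃ e : Eqn k, e.1 = i ∧ a i • P.1 + b i • P.2 = evalEqn p n k a b env e := by
  obtain ⟨j, hj⟩ := (mem_Bm p n k a b).mp h
  unfold F at hj
  rcases absLex_eq_or p n hj with h' | h'
  · refine ⟨(i, true, s, j), rfl, ?_⟩
    show elt p n k a b P i = evalEqn p n k a b env (i, true, s, j)
    unfold evalEqn
    rw [if_pos rfl]
    show _ = elt p n k a b (env s) j
    rw [hs, h']
  · refine ⟨(i, false, s, j), rfl, ?_⟩
    show elt p n k a b P i = evalEqn p n k a b env (i, false, s, j)
    unfold evalEqn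
    rw [if_neg (by simp)]
    show _ = - elt p n k a b (env s) j
    rw [hs, h', neg_neg]

lemma build
    (z : (Fin 2 → (Fin n → ZMod p)) × (Fin 2 → Fin 2 → Pr p n))
    (m0 : Fin 2) (q1 q2 : Fin k) (w : Fin n → ZMod p) (d1 d2 d3 : Desc k)
    (h1 : decodePair p n k a b ![z.2 0 0, z.2 0 0, z.2 0 0] w d1 = z.2 0 1)
    (h2 : decodePair p n k a b ![z.2 0 0, z.2 0 1, z.2 0 1] w d2 = z.2 1 m0)
    (h3 : decodePair p n k a b ![z.2 0 0, z.2 0 1, z.2 1 m0] w d3 = z.2 1 (m0 + 1))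
    (hq1 : elt p n k a b (z.2 0 0) q1 = z.1 0)
    (hq2 : elt p n k a b (z.2 1 m0) q2 = z.1 1) :
    Dec p n k a b (z.2 0 0, w, (m0, q1, q2, d1, d2, d3)) = z := by
  have e1 : dP11 p n k a b (z.2 0 0, w, (m0, q1, q2, d1, d2, d3)) = z.2 0 1 := h1
  have e2 : dPf p n k a b (z.2 0 0, w, (m0, q1, q2, d1, d2, d3)) = z.2 1 m0 := by
    unfold dPf
    rw [e1]
    exact h2
  have e3 : dPs p n k a b (z.2 0 0, w, (m0, q1, q2, d1, d2, d3)) = z.2 1 (m0 + 1) := by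
    unfold dPs
    rw [e1, e2]
    exact h3
  have fin2 : ∀ l : Fin 2, l = 0 ∨ l = 1 := by decide
  refine Prod.ext ?_ ?_
  · funext l
    show (if l = 0 then _ else _) = z.1 l
    rcases fin2 l with rfl | rfl
    · rw [if_pos rfl]
      exact hq1
    · rw [if_neg (by decide), e2]
      exact hq2
  · funext l m
    show (if l = 0 then (if m = 0 then _ else _) else (if m = m0 then _ else _)) = z.2 l m
    rcases fin2 l with rfl | rfl
    · rcases fin2 m with rfl | rfl
      · rw [if_pos rfl, if_pos rfl]
      · rw [if_pos rfl, if_neg (by decide), e1]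
    · rw [if_neg (by decide), e2, e3]
      by_cases hm : m = m0
      · rw [if_pos hm, hm]
      · rw [if_neg hm]
        have hmm : m0 + 1 = m := by
          rcases fin2 m with rfl | rfl <;> rcases fin2 m0 with rfl | rfl <;>
            first | (exact absurd rfl hm) | decide
        rw [hmm]

lemma recon [Fact p.Prime] (hk : 3 ≤ k)
    (hminors : ∀ i j : Fin k, i ≠ j → a i * b j - a j * b i ≠ 0)
    (z : (Fin 2 → (Fin n → ZMod p)) × (Fin 2 → Fin 2 → Pr p n))
    (hli : ∀ l m : Fin 2, LinearIndependent (ZMod p) ![(z.2 l m).1, (z.2 l m).2])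
    (hmem : ∀ l m : Fin 2, z.1 l ∈ Mset p n k a b (z.2 l m).1 (z.2 l m).2)
    (hx : ∃ x, ∀ l : Fin 2, x ∈ Bm p n k a b (z.2 l 0) + Bm p n k a b (z.2 l 1))
    (hV : ∃ V, Bm p n k a b (z.2 0 0) + Bm p n k a b (z.2 0 1) +
          (Bm p n k a b (z.2 1 0) + Bm p n k a b (z.2 1 1)) = V + V) :
    ∃ t : Pr p n × (Fin n → ZMod p) × Delta k, Dec p n k a b t = z := by
  obtain ⟨x, hx⟩ := hx
  obtain ⟨V, hV⟩ := hV
  have fin2 : ∀ l : Fin 2, l = 0 ∨ l = 1 := by decide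
  have hidx : ∀ l m : Fin 2, ∃ i, elt p n k a b (z.2 l m) i = z.1 l := by
    intro l m
    obtain ⟨i, -, hi⟩ := Multiset.mem_map.mp (hmem l m)
    exact ⟨i, hi⟩
  have hnd : ∀ l m : Fin 2, (Bm p n k a b (z.2 l m)).Nodup :=
    fun l m => Bm_nodup p n k a b hminors (hli l m)
  have hcle : ∀ (l m : Fin 2) w', Multiset.count w' (Bm p n k a b (z.2 l m)) ≤ 1 :=
    fun l m => Multiset.nodup_iff_count_le_one.mp (hnd l m)
  have hc1 : ∀ (l m : Fin 2) (i : Fin k),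
      Multiset.count (F p n k a b (z.2 l m) i) (Bm p n k a b (z.2 l m)) = 1 :=
    fun l m i => Multiset.count_eq_one_of_mem (hnd l m) ((mem_Bm p n k a b).mpr ⟨i, rfl⟩)
  have hpar : ∀ w', Multiset.count w' (Bm p n k a b (z.2 0 0))
      + Multiset.count w' (Bm p n k a b (z.2 0 1))
      + (Multiset.count w' (Bm p n k a b (z.2 1 0))
      + Multiset.count w' (Bm p n k a b (z.2 1 1)))
      = 2 * Multiset.count w' V := by
    intro w'
    have := congrArg (Multiset.count w') hV
    simpa [Multiset.count_add, two_mul] using this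
  set O : (Fin n → ZMod p) → Prop :=
    fun w' => (Multiset.count w' (Bm p n k a b (z.2 0 0))
      + Multiset.count w' (Bm p n k a b (z.2 0 1))) % 2 = 1 with hOdef
  have mkchar : ∀ (l m m' : Fin 2), m ≠ m' →
      ∀ i, (¬ O (F p n k a b (z.2 l m) i) ↔
        F p n k a b (z.2 l m) i ∈ Bm p n k a b (z.2 l m')) := by
    intro l m m' hmm' i
    have h1 := hc1 l m i
    have h2 := hcle l m' (F p n k a b (z.2 l m) i)
    have h3 := hpar (F p n k a b (z.2 l m) i)
    rw [← Multiset.count_pos]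
    simp only [hOdef]
    rcases fin2 l with rfl | rfl <;> rcases fin2 m with rfl | rfl <;>
        rcases fin2 m' with rfl | rfl <;>
      first
        | (exact absurd rfl hmm')
        | (constructor <;> intro <;> omega)
  have hksplit : ∀ (l m : Fin 2),
      (univ.filter fun i => O (F p n k a b (z.2 l m) i)).card
      + (univ.filter fun i => ¬ O (F p n k a b (z.2 l m) i)).card = k := by
    intro l m
    rw [Finset.card_filter_add_card_filter_not, Finset.card_univ, Fintype.card_fin]
  have hnotO : ∀ (l m m' : Fin 2), m ≠ m' →
      (univ.filter fun i => ¬ O (F p n k a b (z.2 l m) i)).card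
        = (univ.filter fun i => F p n k a b (z.2 l m) i ∈ Bm p n k a b (z.2 l m')).card := by
    intro l m m' hmm'
    exact congrArg Finset.card (Finset.filter_congr (fun i _ => by rw [mkchar l m m' hmm' i]))
  have filter_to_inter : ∀ (P : Pr p n), LinearIndependent (ZMod p) ![P.1, P.2] →
      ∀ (B : Multiset (Fin n → ZMod p)),
      (univ.filter fun i => F p n k a b P i ∈ B).card
        = ((Bm p n k a b P).toFinset ∩ B.toFinset).card := by
    intro P hP B
    rw [card_filter_F p n k a b hminors hP (fun v => v ∈ B)]
    congr 1
    ext v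
    simp [Multiset.mem_toFinset, Finset.mem_inter, Finset.mem_filter]
  have hswap : ∀ l : Fin 2,
      (univ.filter fun i => F p n k a b (z.2 l 0) i ∈ Bm p n k a b (z.2 l 1)).card
        = (univ.filter fun i => F p n k a b (z.2 l 1) i ∈ Bm p n k a b (z.2 l 0)).card := by
    intro l
    rw [filter_to_inter _ (hli l 0), filter_to_inter _ (hli l 1), Finset.inter_comm]
  have hOeq : ∀ l : Fin 2,
      (univ.filter fun i => O (F p n k a b (z.2 l 0) i)).card
      = (univ.filter fun i => O (F p n k a b (z.2 l 1) i)).card := by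
    intro l
    have e0 := hnotO l 0 1 (by decide)
    have e1 := hnotO l 1 0 (by decide)
    have e2 := hswap l
    have k0 := hksplit l 0
    have k1 := hksplit l 1
    omega
  have hsum : ∀ l : Fin 2,
      (univ.filter fun i => O (F p n k a b (z.2 l 0) i)).card
      + (univ.filter fun i => O (F p n k a b (z.2 l 1) i)).card
      = (((Bm p n k a b (z.2 l 0)).toFinset ∪ (Bm p n k a b (z.2 l 1)).toFinset).filter O).card := by
    intro l
    rw [card_filter_F p n k a b hminors (hli l 0) O, card_filter_F p n k a b hminors (hli l 1) O]
    have hui := Finset.card_union_add_card_inter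
      ((Bm p n k a b (z.2 l 0)).toFinset.filter O)
      ((Bm p n k a b (z.2 l 1)).toFinset.filter O)
    rw [← Finset.filter_union, ← Finset.filter_inter_distrib] at hui
    have hempty : (((Bm p n k a b (z.2 l 0)).toFinset ∩ (Bm p n k a b (z.2 l 1)).toFinset).filter O) = ∅ := by
      rw [Finset.filter_eq_empty_iff]
      intro w' hw'
      rw [Finset.mem_inter, Multiset.mem_toFinset, Multiset.mem_toFinset] at hw'
      have c0 := Multiset.count_eq_one_of_mem (hnd l 0) hw'.1
      have c1 := Multiset.count_eq_one_of_mem (hnd l 1) hw'.2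
      have h3 := hpar w'
      simp only [hOdef]
      rcases fin2 l with rfl | rfl <;> omega
    rw [hempty] at hui
    simp at hui
    omega
  have hUeq : (((Bm p n k a b (z.2 0 0)).toFinset ∪ (Bm p n k a b (z.2 0 1)).toFinset).filter O)
      = (((Bm p n k a b (z.2 1 0)).toFinset ∪ (Bm p n k a b (z.2 1 1)).toFinset).filter O) := by
    ext w'
    simp only [Finset.mem_filter, Finset.mem_union, Multiset.mem_toFinset,
      ← Multiset.count_pos, hOdef]
    have h3 := hpar w'
    omega
  have hQR : (univ.filter fun i => O (F p n k a b (z.2 0 1) i)).card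
      = (univ.filter fun i => O (F p n k a b (z.2 1 0) i)).card := by
    have s0 := hsum 0
    have s1 := hsum 1
    rw [hUeq] at s0
    have e0 := hOeq 0
    have e1 := hOeq 1
    omega
  have crossO : ∀ (m : Fin 2) (i : Fin k), O (F p n k a b (z.2 1 m) i) →
      F p n k a b (z.2 1 m) i ∈ Bm p n k a b (z.2 0 0) + Bm p n k a b (z.2 0 1) := by
    intro m i hOi
    rw [← Multiset.count_pos, Multiset.count_add]
    simp only [hOdef] at hOi
    omega
  have hcross_ge : ∀ m : Fin 2,
      (univ.filter fun i => O (F p n k a b (z.2 1 m) i)).card ≤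
      (univ.filter fun i => F p n k a b (z.2 1 m) i
        ∈ Bm p n k a b (z.2 0 0) + Bm p n k a b (z.2 0 1)).card := by
    intro m
    apply Finset.card_le_card
    intro i hi
    rw [Finset.mem_filter] at *
    exact ⟨hi.1, crossO m i hi.2⟩
  by_cases Hc : 2 ≤ (univ.filter fun i => F p n k a b (z.2 1 0) i
        ∈ Bm p n k a b (z.2 0 0) + Bm p n k a b (z.2 0 1)).card
      ∧ 2 ≤ (univ.filter fun i => F p n k a b (z.2 1 1) i
        ∈ Bm p n k a b (z.2 0 0) + Bm p n k a b (z.2 0 1)).card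
  · -- case I : both half-2 multisets have two elements matched in half 1
    obtain ⟨i1, hi1⟩ := hidx 0 1
    obtain ⟨q1, hq1⟩ := hidx 0 0
    obtain ⟨q2, hq2⟩ := hidx 1 0
    have he1 : a i1 • (z.2 0 1).1 + b i1 • (z.2 0 1).2
        = evalEqn p n k a b ![z.2 0 0, z.2 0 0, z.2 0 0] (i1, true, (0 : Fin 3), q1) := by
      show elt p n k a b (z.2 0 1) i1 = _
      unfold evalEqn
      rw [if_pos rfl]
      show _ = elt p n k a b (z.2 0 0) q1
      rw [hi1, hq1]
    obtain ⟨w1, hd1⟩ := decode_oneEq p n k a b ![z.2 0 0, z.2 0 0, z.2 0 0]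
      (i1, true, (0 : Fin 3), q1) (ab_ne p k a b hk hminors i1) he1
    have getEq : ∀ (P : Pr p n) (env : Fin 3 → Pr p n), env 0 = z.2 0 0 → env 1 = z.2 0 1 →
        ∀ i : Fin k, F p n k a b P i ∈ Bm p n k a b (z.2 0 0) + Bm p n k a b (z.2 0 1) →
        ∃ e : Eqn k, e.1 = i ∧ a i • P.1 + b i • P.2 = evalEqn p n k a b env e := by
      intro P env h0 h1 i hi
      rcases Multiset.mem_add.mp hi with h | h
      · exact eqn_of_mem p n k a b env 0 h0 h
      · exact eqn_of_mem p n k a b env 1 h1 h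
    obtain ⟨iA, iB, hAB, hA, hB⟩ := two_from_card (k := k) Hc.1
    obtain ⟨eA, heA1, heA2⟩ := getEq (z.2 1 0) ![z.2 0 0, z.2 0 1, z.2 0 1] rfl rfl iA hA
    obtain ⟨eB, heB1, heB2⟩ := getEq (z.2 1 0) ![z.2 0 0, z.2 0 1, z.2 0 1] rfl rfl iB hB
    rw [← heA1] at heA2
    rw [← heB1] at heB2
    have hd2 := decode_twoEq p n k a b hminors ![z.2 0 0, z.2 0 1, z.2 0 1] eA eB
      (by rw [heA1, heB1]; exact hAB) heA2 heB2 w1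
    obtain ⟨iC, iD, hCD, hC, hD⟩ := two_from_card (k := k) Hc.2
    obtain ⟨eC, heC1, heC2⟩ := getEq (z.2 1 1) ![z.2 0 0, z.2 0 1, z.2 1 0] rfl rfl iC hC
    obtain ⟨eD, heD1, heD2⟩ := getEq (z.2 1 1) ![z.2 0 0, z.2 0 1, z.2 1 0] rfl rfl iD hD
    rw [← heC1] at heC2
    rw [← heD1] at heD2
    have hd3 := decode_twoEq p n k a b hminors ![z.2 0 0, z.2 0 1, z.2 1 0] eC eD
      (by rw [heC1, heD1]; exact hCD) heC2 heD2 w1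
    exact ⟨_, build p n k a b z 0 q1 q2 w1 _ _ _ hd1 hd2 hd3 hq1 hq2⟩
  · -- case II
    rw [not_and_or] at Hc
    have hOR1 : ∀ m : Fin 2, (univ.filter fun i => O (F p n k a b (z.2 1 m) i)).card ≤ 1 := by
      have e := hOeq 1
      have g0 := hcross_ge 0
      have g1 := hcross_ge 1
      rcases Hc with h | h <;> rw [not_le] at h <;>
        (intro m; rcases fin2 m with rfl | rfl <;> omega)
    have hOQ1 : (univ.filter fun i => O (F p n k a b (z.2 0 1) i)).card ≤ 1 := by
      have h1 := hQR
      have h2 := hOR1 0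
      omega
    have htwoQ : 2 ≤ (univ.filter fun i => F p n k a b (z.2 0 1) i ∈ Bm p n k a b (z.2 0 0)).card := by
      have h1 := hksplit 0 1
      have h2 := hnotO 0 1 0 (by decide)
      omega
    have htwoR : ∀ m m' : Fin 2, m ≠ m' →
        2 ≤ (univ.filter fun i => F p n k a b (z.2 1 m) i ∈ Bm p n k a b (z.2 1 m')).card := by
      intro m m' hmm'
      have h1 := hksplit 1 m
      have h2 := hnotO 1 m m' hmm'
      have h3 := hOR1 m
      omega
    obtain ⟨iA, iB, hAB, hA, hB⟩ := two_from_card (k := k) htwoQ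
    obtain ⟨eA, heA1, heA2⟩ := eqn_of_mem p n k a b ![z.2 0 0, z.2 0 0, z.2 0 0] 0 rfl hA
    obtain ⟨eB, heB1, heB2⟩ := eqn_of_mem p n k a b ![z.2 0 0, z.2 0 0, z.2 0 0] 0 rfl hB
    rw [← heA1] at heA2
    rw [← heB1] at heB2
    have hd1 := decode_twoEq p n k a b hminors ![z.2 0 0, z.2 0 0, z.2 0 0] eA eB
      (by rw [heA1, heB1]; exact hAB) heA2 heB2
    have hx0 := hx 0
    have hx1 := hx 1
    rcases Multiset.mem_add.mp hx1 with hxR | hxR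
    · -- x ∈ Bm (z.2 1 0), m0 = 0
      obtain ⟨i0, hi0⟩ := (mem_Bm p n k a b).mp hxR
      have hmem2 : ∃ e : Eqn k, e.1 = i0 ∧ a i0 • (z.2 1 0).1 + b i0 • (z.2 1 0).2
          = evalEqn p n k a b ![z.2 0 0, z.2 0 1, z.2 0 1] e := by
        rcases Multiset.mem_add.mp hx0 with hq | hq
        · exact eqn_of_mem p n k a b _ 0 rfl (by rw [hi0]; exact hq)
        · exact eqn_of_mem p n k a b _ 1 rfl (by rw [hi0]; exact hq)
      obtain ⟨e0, he01, he02⟩ := hmem2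
      rw [← he01] at he02
      obtain ⟨w2, hd2⟩ := decode_oneEq p n k a b _ e0 (ab_ne p k a b hk hminors e0.1) he02
      obtain ⟨iC, iD, hCD, hC, hD⟩ := two_from_card (k := k) (htwoR 1 0 (by decide))
      obtain ⟨eC, heC1, heC2⟩ := eqn_of_mem p n k a b ![z.2 0 0, z.2 0 1, z.2 1 0] 2 rfl hC
      obtain ⟨eD, heD1, heD2⟩ := eqn_of_mem p n k a b ![z.2 0 0, z.2 0 1, z.2 1 0] 2 rfl hD
      rw [← heC1] at heC2
      rw [← heD1] at heD2
      have hd3 := decode_twoEq p n k a b hminors ![z.2 0 0, z.2 0 1, z.2 1 0] eC eD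
        (by rw [heC1, heD1]; exact hCD) heC2 heD2 w2
      obtain ⟨q1, hq1⟩ := hidx 0 0
      obtain ⟨q2, hq2⟩ := hidx 1 0
      exact ⟨_, build p n k a b z 0 q1 q2 w2 _ _ _ (hd1 w2) hd2 hd3 hq1 hq2⟩
    · -- x ∈ Bm (z.2 1 1), m0 = 1
      obtain ⟨i0, hi0⟩ := (mem_Bm p n k a b).mp hxR
      have hmem2 : ∃ e : Eqn k, e.1 = i0 ∧ a i0 • (z.2 1 1).1 + b i0 • (z.2 1 1).2
          = evalEqn p n k a b ![z.2 0 0, z.2 0 1, z.2 0 1] e := by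
        rcases Multiset.mem_add.mp hx0 with hq | hq
        · exact eqn_of_mem p n k a b _ 0 rfl (by rw [hi0]; exact hq)
        · exact eqn_of_mem p n k a b _ 1 rfl (by rw [hi0]; exact hq)
      obtain ⟨e0, he01, he02⟩ := hmem2
      rw [← he01] at he02
      obtain ⟨w2, hd2⟩ := decode_oneEq p n k a b _ e0 (ab_ne p k a b hk hminors e0.1) he02
      obtain ⟨iC, iD, hCD, hC, hD⟩ := two_from_card (k := k) (htwoR 0 1 (by decide))
      obtain ⟨eC, heC1, heC2⟩ := eqn_of_mem p n k a b ![z.2 0 0, z.2 0 1, z.2 1 1] 2 rfl hC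
      obtain ⟨eD, heD1, heD2⟩ := eqn_of_mem p n k a b ![z.2 0 0, z.2 0 1, z.2 1 1] 2 rfl hD
      rw [← heC1] at heC2
      rw [← heD1] at heD2
      have hd3 := decode_twoEq p n k a b hminors ![z.2 0 0, z.2 0 1, z.2 1 1] eC eD
        (by rw [heC1, heD1]; exact hCD) heC2 heD2 w2
      obtain ⟨q1, hq1⟩ := hidx 0 0
      obtain ⟨q2, hq2⟩ := hidx 1 1
      exact ⟨_, build p n k a b z 1 q1 q2 w2 _ _ _ (hd1 w2) hd2 hd3 hq1 hq2⟩

end Stmt19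

/-- Let `p > 2` be prime, `k ≥ 3`, and `a, b ∈ 𝔽_p^k` with all `2 × 2` minors nonzero.
There is a constant `C` (depending only on `p, k`) such that for all `n ≥ 1`, the number
of tuples `(h₁, h₂, (r_1,s_1), (r_1',s_1'), (r_2,s_2), (r_2',s_2'))` — with
`0 ≺ h₁ ≠ h₂ ≻ 0`, all four pairs linearly independent, `h_l` belonging to and
`⪰`-maximal (in absolute value) in each of its two multisets, the multisets
`|M(r_1,s_1)| ∪ |M(r_1',s_1')|` and `|M(r_2,s_2)| ∪ |M(r_2',s_2')|` sharing a common
element, and their `4k`-element union partitionable into pairs of equal elements —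
is at most `C · p^{3n}`. Here `z.1 l` is `h_{l+1}` and `z.2 l m` is the `m`-th pair
for `h_{l+1}`. -/
theorem stmt19 (p k : ℕ) [NeZero p] (hp : p.Prime) (hp2 : 2 < p) (hk : 3 ≤ k)
    (a b : Fin k → ZMod p)
    (hminors : ∀ i j : Fin k, i ≠ j → a i * b j - a j * b i ≠ 0) :
    ∃ C : ℝ, ∀ n : ℕ, 1 ≤ n →
      ((Finset.univ.filter
          (fun z : (Fin 2 → (Fin n → ZMod p)) ×
              (Fin 2 → Fin 2 → (Fin n → ZMod p) × (Fin n → ZMod p)) =>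
            (∀ l : Fin 2, posLex p n (z.1 l)) ∧
            z.1 0 ≠ z.1 1 ∧
            (∀ l m : Fin 2, LinearIndependent (ZMod p) ![(z.2 l m).1, (z.2 l m).2]) ∧
            (∀ l m : Fin 2, z.1 l ∈ Mset p n k a b (z.2 l m).1 (z.2 l m).2 ∧
              ∀ h' ∈ Mset p n k a b (z.2 l m).1 (z.2 l m).2,
                lexLe p n (absLex p n h') (z.1 l)) ∧
            (∃ x : Fin n → ZMod p,
              (∀ l : Fin 2, x ∈
                (Mset p n k a b (z.2 l 0).1 (z.2 l 0).2).map (absLex p n) +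
                (Mset p n k a b (z.2 l 1).1 (z.2 l 1).2).map (absLex p n))) ∧
            (∃ V : Multiset (Fin n → ZMod p),
              (∑ l : Fin 2, ∑ m : Fin 2,
                  (Mset p n k a b (z.2 l m).1 (z.2 l m).2).map (absLex p n))
                = V + V))).card : ℝ)
        ≤ C * (p : ℝ) ^ (3 * n) := by
  haveI := Fact.mk hp
  refine ⟨(Fintype.card (Stmt19.Delta k) : ℝ), ?_⟩
  intro n hn
  set S := (Finset.univ.filter
          (fun z : (Fin 2 → (Fin n → ZMod p)) ×
              (Fin 2 → Fin 2 → (Fin n → ZMod p) × (Fin n → ZMod p)) =>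
            (∀ l : Fin 2, posLex p n (z.1 l)) ∧
            z.1 0 ≠ z.1 1 ∧
            (∀ l m : Fin 2, LinearIndependent (ZMod p) ![(z.2 l m).1, (z.2 l m).2]) ∧
            (∀ l m : Fin 2, z.1 l ∈ Mset p n k a b (z.2 l m).1 (z.2 l m).2 ∧
              ∀ h' ∈ Mset p n k a b (z.2 l m).1 (z.2 l m).2,
                lexLe p n (absLex p n h') (z.1 l)) ∧
            (∃ x : Fin n → ZMod p,
              (∀ l : Fin 2, x ∈
                (Mset p n k a b (z.2 l 0).1 (z.2 l 0).2).map (absLex p n) +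
                (Mset p n k a b (z.2 l 1).1 (z.2 l 1).2).map (absLex p n))) ∧
            (∃ V : Multiset (Fin n → ZMod p),
              (∑ l : Fin 2, ∑ m : Fin 2,
                  (Mset p n k a b (z.2 l m).1 (z.2 l m).2).map (absLex p n))
                = V + V))) with hS
  have key : ∀ z ∈ S, ∃ t : Stmt19.Pr p n × (Fin n → ZMod p) × Stmt19.Delta k,
      Stmt19.Dec p n k a b t = z := by
    intro z hz
    rw [hS, Finset.mem_filter] at hz
    obtain ⟨-, hpos, hne, hli, hmm, hxx, hVV⟩ := hz
    refine Stmt19.recon p n k a b hk hminors z hli (fun l m => (hmm l m).1) hxx ?_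
    obtain ⟨V, hV⟩ := hVV
    refine ⟨V, ?_⟩
    rw [Fin.sum_univ_two, Fin.sum_univ_two, Fin.sum_univ_two] at hV
    exact hV
  have hsub : S ⊆ Finset.image (Stmt19.Dec p n k a b) Finset.univ := by
    intro z hz
    obtain ⟨t, ht⟩ := key z hz
    exact Finset.mem_image.mpr ⟨t, Finset.mem_univ t, ht⟩
  have h1 : S.card ≤ Fintype.card (Stmt19.Pr p n × (Fin n → ZMod p) × Stmt19.Delta k) := by
    refine le_trans (Finset.card_le_card hsub) (le_trans Finset.card_image_le ?_)
    rw [Finset.card_univ]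
  have h2 : Fintype.card (Stmt19.Pr p n × (Fin n → ZMod p) × Stmt19.Delta k)
      = Fintype.card (Stmt19.Delta k) * p ^ (3 * n) := by
    rw [Fintype.card_prod, Fintype.card_prod, Fintype.card_prod, Fintype.card_fun,
      ZMod.card, Fintype.card_fin]
    rw [show 3 * n = n + (n + n) by ring, pow_add, pow_add]
    ring
  rw [h2] at h1
  calc (S.card : ℝ) ≤ ((Fintype.card (Stmt19.Delta k) * p ^ (3 * n) : ℕ) : ℝ) := by
        exact_mod_cast h1
    _ = (Fintype.card (Stmt19.Delta k) : ℝ) * (p : ℝ) ^ (3 * n) := by push_cast; ring
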